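/- The modal logic K (classical modal logic with the K axiom and necessitation) has the uniform interpolation property: for every formula A and atom p there exist p-free formulas ∀pA and ∃pA with K ⊢ ∀pA → A, K ⊢ A → ∃pA, and for every p-free B: K ⊢ B → A implies K ⊢ B → ∀pA, and K ⊢ A → B implies K ⊢ ∃pA → B. -/

import Mathlib

inductive MF : Type where
  | var : Nat → MF
  | bot : MF
  | imp : MF → MF → MF
  | box : MF → MF
  deriving DecidableEq

def MF.occurs (p : Nat) : MF → Bool
  | .var q => p == q
  | .bot => false
  | .imp a b => a.occurs p || b.occurs p
  | .box a => a.occurs p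

def pFree (p : Nat) (φ : MF) : Prop := φ.occurs p = false

/-- The smallest normal modal logic `K`: classical propositional logic plus the
axiom `□(A → B) → (□A → □B)` and the necessitation rule. -/
inductive KThm : MF → Prop where
  | a1 (A B : MF) : KThm (A.imp (B.imp A))
  | a2 (A B C : MF) : KThm ((A.imp (B.imp C)).imp ((A.imp B).imp (A.imp C)))
  | a3 (A B : MF) : KThm (((A.imp MF.bot).imp (B.imp MF.bot)).imp (B.imp A))
  | axK (A B : MF) : KThm ((MF.box (A.imp B)).imp ((MF.box A).imp (MF.box B)))
  | mp (A B : MF) : KThm (A.imp B) → KThm A → KThm B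
  | nec (A : MF) : KThm A → KThm (MF.box A)

namespace KUIP

def neg (A : MF) : MF := A.imp .bot

/-! ### Hilbert toolkit -/

theorem kmp {A B : MF} (h1 : KThm (A.imp B)) (h2 : KThm A) : KThm B := KThm.mp A B h1 h2

theorem thm_id (A : MF) : KThm (A.imp A) := by
  have h1 := KThm.a2 A (A.imp A) A
  have h2 := KThm.a1 A (A.imp A)
  have h3 := kmp h1 h2
  exact kmp h3 (KThm.a1 A A)

theorem compI {A B C : MF} (h : KThm (A.imp B)) : KThm ((C.imp A).imp (C.imp B)) :=
  kmp (KThm.a2 C A B) (kmp (KThm.a1 (A.imp B) C) h)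

theorem imp_trans {A B C : MF} (h1 : KThm (A.imp B)) (h2 : KThm (B.imp C)) :
    KThm (A.imp C) := kmp (compI h2) h1

def impList (L : List MF) (A : MF) : MF := L.foldr .imp A

theorem thmWeak {A : MF} (h : KThm A) : ∀ L : List MF, KThm (impList L A)
  | [] => h
  | B :: L => kmp (KThm.a1 _ B) (thmWeak h L)

theorem liftS {X Y Z : MF} (h : KThm (X.imp (Y.imp Z))) :
    ∀ {C : MF}, KThm ((C.imp X).imp ((C.imp Y).imp (C.imp Z))) := by
  intro C
  exact imp_trans (compI h) (KThm.a2 C Y Z)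

/-- internal application under a list of hypotheses -/
theorem appCtxI (L : List MF) (X Y : MF) :
    KThm ((impList L (X.imp Y)).imp ((impList L X).imp (impList L Y))) := by
  induction L with
  | nil => exact thm_id _
  | cons C L ih => exact liftS ih

theorem appCtx {L : List MF} {X Y : MF} (h1 : KThm (impList L (X.imp Y)))
    (h2 : KThm (impList L X)) : KThm (impList L Y) :=
  kmp (kmp (appCtxI L X Y) h1) h2

theorem proj {C : MF} : ∀ L : List MF, KThm (C.imp (impList L C))
  | [] => thm_id C
  | E :: L => imp_trans (proj L) (KThm.a1 _ E)

theorem memImp {C : MF} : ∀ {M : List MF}, C ∈ M → KThm (impList M C) := by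
  intro M hm
  induction M with
  | nil => simp at hm
  | cons D M ih =>
    rcases List.mem_cons.1 hm with h | h
    · subst h; exact proj M
    · exact kmp (KThm.a1 _ D) (ih h)

theorem absorb {M : List MF} {A : MF} :
    ∀ {L : List MF}, (∀ x ∈ L, KThm (impList M x)) → KThm (impList M (impList L A)) →
      KThm (impList M A) := by
  intro L
  induction L with
  | nil => intro _ h; exact h
  | cons C L ih =>
    intro hx h
    exact ih (fun x hxl => hx x (List.mem_cons_of_mem _ hxl))
      (appCtx h (hx C (List.mem_cons_self)))

/-- structural rule: reorder / weaken / contract -/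
theorem gen' {L M : List MF} {A : MF} (h : KThm (impList L A))
    (hsub : ∀ x ∈ L, x ∈ M) : KThm (impList M A) :=
  absorb (fun x hx => memImp (hsub x hx)) (thmWeak h M)

theorem exfalso_thm (X : MF) : KThm (MF.bot.imp X) := by
  have h := KThm.a3 X MF.bot
  exact kmp h (kmp (KThm.a1 (MF.bot.imp MF.bot) (X.imp MF.bot)) (thm_id MF.bot))

theorem swap_thm {A B C : MF} (h : KThm (A.imp (B.imp C))) : KThm (B.imp (A.imp C)) := by
  have := gen' (L := [A, B]) (M := [B, A]) (A := C) h (by intro x hx; simp at hx ⊢; tauto)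
  exact this

theorem dne (A : MF) : KThm ((neg (neg A)).imp A) := by
  have hT : KThm ((neg A).imp ((neg (neg A)).imp MF.bot)) :=
    swap_thm (A := neg (neg A)) (B := neg A) (C := MF.bot)
      (by simpa [neg] using thm_id (neg (neg A)))
  exact kmp (KThm.a3 A (neg (neg A))) hT

/-- box lifting, internal form -/
theorem boxI (A : MF) : ∀ L : List MF,
    KThm ((MF.box (impList L A)).imp (impList (L.map MF.box) (MF.box A)))
  | [] => thm_id _
  | C :: L => imp_trans (KThm.axK C (impList L A)) (compI (boxI A L))

theorem boxLift {L : List MF} {A : MF} (h : KThm (impList L A)) :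
    KThm (impList (L.map MF.box) (MF.box A)) :=
  kmp (boxI A L) (KThm.nec _ h)

theorem liftK {X Y : MF} (h : KThm (X.imp Y)) :
    ∀ L : List MF, KThm ((impList L X).imp (impList L Y))
  | [] => h
  | C :: L => compI (liftK h L)

/-! ### Semantics -/

structure Kripke where
  W : Type
  R : W → W → Prop
  V : W → Nat → Prop

def sat (M : Kripke) : M.W → MF → Prop
  | w, .var q => M.V w q
  | _, .bot => False
  | w, .imp A B => sat M w A → sat M w B
  | w, .box A => ∀ v, M.R w v → sat M v A

def valid (A : MF) : Prop := ∀ (M : Kripke) (w : M.W), sat M w A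

theorem soundness {A : MF} (h : KThm A) : valid A := by
  induction h with
  | a1 A B => intro M w; simp [sat]; tauto
  | a2 A B C => intro M w; simp [sat]; tauto
  | a3 A B => intro M w; simp [sat]; tauto
  | axK A B => intro M w; simp [sat]; intro h1 h2 v hv; exact h1 v hv (h2 v hv)
  | mp A B _ _ ih1 ih2 => intro M w; exact ih1 M w (ih2 M w)
  | nec A _ ih => intro M w _ _; exact ih M _

end KUIP

namespace KUIP

/-! ### Completeness -/

def SProv (Γ : Set MF) (A : MF) : Prop :=
  ∃ L : List MF, (∀ x ∈ L, x ∈ Γ) ∧ KThm (impList L A)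

def Con (Γ : Set MF) : Prop := ¬ SProv Γ MF.bot

theorem sprov_of_thm {Γ : Set MF} {A : MF} (h : KThm A) : SProv Γ A :=
  ⟨[], by simp, h⟩

theorem sprov_mono {Γ Δ : Set MF} {A : MF} (h : SProv Γ A) (hsub : Γ ⊆ Δ) : SProv Δ A := by
  obtain ⟨L, hL, hk⟩ := h
  exact ⟨L, fun x hx => hsub (hL x hx), hk⟩

theorem sprov_mem {Γ : Set MF} {A : MF} (h : A ∈ Γ) : SProv Γ A :=
  ⟨[A], by simpa, by simpa [impList] using thm_id A⟩

theorem sprov_mp {Γ : Set MF} {A B : MF} (h1 : SProv Γ (A.imp B)) (h2 : SProv Γ A) :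
    SProv Γ B := by
  obtain ⟨L1, hL1, hk1⟩ := h1
  obtain ⟨L2, hL2, hk2⟩ := h2
  refine ⟨L1 ++ L2, by intro x hx; rcases List.mem_append.1 hx with h | h; exacts [hL1 x h, hL2 x h], ?_⟩
  have h1' : KThm (impList (L1 ++ L2) (A.imp B)) := gen' hk1 (by intro x hx; exact List.mem_append.2 (Or.inl hx))
  have h2' : KThm (impList (L1 ++ L2) A) := gen' hk2 (by intro x hx; exact List.mem_append.2 (Or.inr hx))
  exact appCtx h1' h2'

open Classical in
theorem deduction {Γ : Set MF} {B A : MF} (h : SProv (insert B Γ) A) :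
    SProv Γ (B.imp A) := by
  classical
  obtain ⟨L, hL, hk⟩ := h
  refine ⟨L.filter (fun x => x ≠ B), ?_, ?_⟩
  · intro x hx
    have := List.mem_filter.1 hx
    rcases hL x this.1 with h | h
    · simp_all
    · exact (Set.mem_insert_iff.1 (hL x this.1)).resolve_left (by simpa using this.2)
  · have h1 : KThm (impList (B :: L.filter (fun x => x ≠ B)) A) := by
      refine gen' hk ?_
      intro x hx
      by_cases hxB : x = B
      · subst hxB; exact List.mem_cons_self
      · exact List.mem_cons_of_mem _ (List.mem_filter.2 ⟨hx, by simpa using hxB⟩)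
    have h2 : impList (L.filter (fun x => x ≠ B)) (B.imp A)
        = impList (L.filter (fun x => x ≠ B) ++ [B]) A := by
      simp [impList, List.foldr_append]
    rw [h2]
    refine gen' h1 ?_
    intro x hx
    rcases List.mem_cons.1 hx with h | h
    · subst h; exact List.mem_append.2 (Or.inr (by simp))
    · exact List.mem_append.2 (Or.inl h)

def MCS (Γ : Set MF) : Prop := Con Γ ∧ ∀ A, Con (insert A Γ) → A ∈ Γ

theorem mcs_closed {Γ : Set MF} (hΓ : MCS Γ) {A : MF} (h : SProv Γ A) : A ∈ Γ := by
  refine hΓ.2 A ?_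
  intro hbot
  have h1 : SProv Γ (A.imp MF.bot) := deduction hbot
  exact hΓ.1 (sprov_mp h1 h)

theorem mcs_neg_complete {Γ : Set MF} (hΓ : MCS Γ) (A : MF) : A ∈ Γ ∨ neg A ∈ Γ := by
  by_cases h : A ∈ Γ
  · exact Or.inl h
  · right
    by_contra hn
    apply h
    refine hΓ.2 A ?_
    intro hbot
    have := deduction hbot
    exact hn (mcs_closed hΓ this)

theorem mcs_not_both {Γ : Set MF} (hΓ : MCS Γ) {A : MF} (h1 : A ∈ Γ) (h2 : neg A ∈ Γ) :
    False := hΓ.1 (sprov_mp (sprov_mem h2) (sprov_mem h1))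

theorem lindenbaum {Γ : Set MF} (h : Con Γ) : ∃ Δ, Γ ⊆ Δ ∧ MCS Δ := by
  have hub : ∀ c ⊆ {Δ : Set MF | Γ ⊆ Δ ∧ Con Δ}, IsChain (· ⊆ ·) c → c.Nonempty →
      ∃ ub ∈ {Δ : Set MF | Γ ⊆ Δ ∧ Con Δ}, ∀ s ∈ c, s ⊆ ub := by
    intro c hc hchain hne
    refine ⟨⋃₀ c, ⟨?_, ?_⟩, fun s hs => Set.subset_sUnion_of_mem hs⟩
    · obtain ⟨s, hs⟩ := hne
      exact (hc hs).1.trans (Set.subset_sUnion_of_mem hs)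
    · rintro ⟨L, hL, hk⟩
      -- find a member of the chain containing all of L
      have hdir : DirectedOn (· ⊆ ·) c := hchain.directedOn
      have key : ∀ L' : List MF, (∀ x ∈ L', x ∈ ⋃₀ c) → ∃ s ∈ c, ∀ x ∈ L', x ∈ s := by
        intro L'
        induction L' with
        | nil => intro _; obtain ⟨s, hs⟩ := hne; exact ⟨s, hs, by simp⟩
        | cons a L' ih =>
          intro hL'
          obtain ⟨s, hsc, hsL⟩ := ih (fun x hx => hL' x (List.mem_cons_of_mem _ hx))
          obtain ⟨t, htc, hta⟩ := hL' a (List.mem_cons_self)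
          obtain ⟨u, huc, hsu, htu⟩ := hdir s hsc t htc
          refine ⟨u, huc, ?_⟩
          intro x hx
          rcases List.mem_cons.1 hx with rfl | hx
          · exact htu hta
          · exact hsu (hsL x hx)
      obtain ⟨s, hsc, hsL⟩ := key L hL
      exact (hc hsc).2 ⟨L, hsL, hk⟩
  obtain ⟨Δ, hΔsub, hΔmax⟩ := zorn_subset_nonempty {Δ : Set MF | Γ ⊆ Δ ∧ Con Δ}
    hub Γ ⟨subset_rfl, h⟩
  refine ⟨Δ, hΔsub, hΔmax.1.2, ?_⟩
  intro A hA
  have hmem : insert A Δ ∈ {Δ : Set MF | Γ ⊆ Δ ∧ Con Δ} :=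
    ⟨hΔmax.1.1.trans (Set.subset_insert _ _), hA⟩
  exact hΔmax.2 hmem (Set.subset_insert _ _) (Set.mem_insert _ _)

noncomputable def canonical : Kripke where
  W := {Γ : Set MF // MCS Γ}
  R Γ Δ := ∀ A : MF, MF.box A ∈ Γ.1 → A ∈ Δ.1
  V Γ q := MF.var q ∈ Γ.1

theorem truth_lemma : ∀ (A : MF) (Γ : canonical.W), sat canonical Γ A ↔ A ∈ Γ.1 := by
  intro A
  induction A with
  | var q => intro Γ; rfl
  | bot =>
    intro Γ
    simp only [sat]
    constructor
    · intro h; exact h.elim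
    · intro h; exact Γ.2.1 (sprov_mem h)
  | imp A B ihA ihB =>
    intro Γ
    simp only [sat]
    constructor
    · intro h
      rcases mcs_neg_complete Γ.2 A with hA | hA
      · have hB := (ihB Γ).1 (h ((ihA Γ).2 hA))
        exact mcs_closed Γ.2 (sprov_mp (sprov_of_thm (KThm.a1 B A)) (sprov_mem hB))
      · -- neg A ∈ Γ : A.imp B provable
        have : SProv Γ.1 (A.imp B) := by
          have h3 : KThm (impList [A, neg A] MF.bot) := by
            have h0 : KThm (impList [neg A, A] MF.bot) := by
              simpa [impList, neg] using thm_id (neg A)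
            exact gen' h0 (by intro x hx; simp at hx ⊢; tauto)
          have h4 : KThm (impList [A, neg A] B) :=
            kmp (liftK (exfalso_thm B) [A, neg A]) h3
          have h2 : KThm (A.imp ((neg A).imp B)) := by simpa [impList] using h4
          have h1 : KThm ((neg A).imp (A.imp B)) := swap_thm h2
          exact sprov_mp (sprov_of_thm h1) (sprov_mem hA)
        exact mcs_closed Γ.2 this
    · intro h hA
      exact (ihB Γ).2 (mcs_closed Γ.2 (sprov_mp (sprov_mem h) (sprov_mem ((ihA Γ).1 hA))))
  | box A ihA =>
    intro Γ
    simp only [sat]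
    constructor
    · intro h
      by_contra hbox
      -- {B | box B ∈ Γ} ∪ {neg A} consistent
      set Γb : Set MF := {B | MF.box B ∈ Γ.1} with hΓb
      have hcon : Con (insert (neg A) Γb) := by
        intro hbot
        have h1 : SProv Γb (neg (neg A)) := deduction hbot
        obtain ⟨L, hL, hk⟩ := h1
        have h2 : KThm (impList L A) := kmp (liftK (dne A) L) hk
        have h3 : KThm (impList (L.map MF.box) (MF.box A)) := boxLift h2
        have h4 : SProv Γ.1 (MF.box A) :=
          ⟨L.map MF.box, by intro x hx
                            obtain ⟨y, hy, rfl⟩ := List.mem_map.1 hx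
                            exact hL y hy, h3⟩
        exact hbox (mcs_closed Γ.2 h4)
      obtain ⟨Δ, hΔsub, hΔ⟩ := lindenbaum hcon
      have hR : canonical.R Γ ⟨Δ, hΔ⟩ := by
        intro B hB
        exact hΔsub (Set.mem_insert_of_mem _ hB)
      have hAΔ : sat canonical ⟨Δ, hΔ⟩ A := h _ hR
      have := (ihA _).1 hAΔ
      exact mcs_not_both hΔ this (hΔsub (Set.mem_insert _ _))
    · intro h Δ hR
      exact (ihA Δ).2 (hR A h)

theorem completeness {A : MF} (h : valid A) : KThm A := by
  by_contra hA
  have hcon : Con {neg A} := by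
    intro hbot
    have : SProv (∅ : Set MF) (neg (neg A)) := by
      have : SProv (insert (neg A) (∅ : Set MF)) MF.bot := by
        simpa using hbot
      exact deduction this
    obtain ⟨L, hL, hk⟩ := this
    have hLnil : L = [] := by
      cases L with
      | nil => rfl
      | cons a L => exact absurd (hL a (List.mem_cons_self)) (by simp)
    subst hLnil
    exact hA (kmp (dne A) hk)
  obtain ⟨Δ, hΔsub, hΔ⟩ := lindenbaum hcon
  have hsatA : sat canonical ⟨Δ, hΔ⟩ A := h canonical _
  have := (truth_lemma A ⟨Δ, hΔ⟩).1 hsatA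
  exact mcs_not_both hΔ this (hΔsub rfl)

end KUIP

namespace KUIP

/-! ### Connectives and list forms -/

def andF (A B : MF) : MF := neg (A.imp (neg B))
def orF (A B : MF) : MF := (neg A).imp B
def diaF (A : MF) : MF := neg (.box (neg A))
def conjList : List MF → MF := fun L => L.foldr andF (neg MF.bot)
def disjList : List MF → MF := fun L => L.foldr orF MF.bot

theorem sat_neg {M : Kripke} {w : M.W} {A : MF} : sat M w (neg A) ↔ ¬ sat M w A := by
  simp [sat, neg]

theorem sat_andF {M : Kripke} {w : M.W} {A B : MF} :
    sat M w (andF A B) ↔ sat M w A ∧ sat M w B := by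
  simp only [sat, andF, neg]
  tauto

theorem sat_orF {M : Kripke} {w : M.W} {A B : MF} :
    sat M w (orF A B) ↔ sat M w A ∨ sat M w B := by
  simp only [sat, orF, neg]
  tauto

theorem sat_diaF {M : Kripke} {w : M.W} {A : MF} :
    sat M w (diaF A) ↔ ∃ v, M.R w v ∧ sat M v A := by
  simp [sat, diaF, neg]

theorem sat_conjList {M : Kripke} {w : M.W} : ∀ {L : List MF},
    (sat M w (conjList L) ↔ ∀ A ∈ L, sat M w A)
  | [] => by simp [conjList, sat_neg, sat]
  | A :: L => by
    simp only [conjList, List.foldr_cons]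
    rw [show (List.foldr andF (neg MF.bot) L) = conjList L from rfl] at *
    rw [sat_andF]
    simp [sat_conjList]

theorem sat_disjList {M : Kripke} {w : M.W} : ∀ {L : List MF},
    (sat M w (disjList L) ↔ ∃ A ∈ L, sat M w A)
  | [] => by simp [disjList, sat]
  | A :: L => by
    simp only [disjList, List.foldr_cons]
    rw [show (List.foldr orF MF.bot L) = disjList L from rfl]
    rw [sat_orF]
    simp [sat_disjList]

theorem occurs_neg {p : ℕ} {A : MF} : (neg A).occurs p = A.occurs p := by
  simp [neg, MF.occurs]

theorem occurs_andF {p : ℕ} {A B : MF} :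
    (andF A B).occurs p = (A.occurs p || B.occurs p) := by
  simp [andF, neg, MF.occurs]

theorem occurs_orF {p : ℕ} {A B : MF} :
    (orF A B).occurs p = (A.occurs p || B.occurs p) := by
  simp [orF, neg, MF.occurs]

theorem occurs_conjList {p : ℕ} : ∀ {L : List MF},
    ((conjList L).occurs p = true ↔ ∃ A ∈ L, A.occurs p = true)
  | [] => by simp [conjList, MF.occurs, neg]
  | A :: L => by
    simp only [conjList, List.foldr_cons]
    rw [show (List.foldr andF (neg MF.bot) L) = conjList L from rfl]
    rw [occurs_andF]
    simp [occurs_conjList]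

theorem occurs_disjList {p : ℕ} : ∀ {L : List MF},
    ((disjList L).occurs p = true ↔ ∃ A ∈ L, A.occurs p = true)
  | [] => by simp [disjList, MF.occurs]
  | A :: L => by
    simp only [disjList, List.foldr_cons]
    rw [show (List.foldr orF MF.bot L) = disjList L from rfl]
    rw [occurs_orF]
    simp [occurs_disjList]

/-! ### Bounded types -/

def TT (S : Finset ℕ) : ℕ → Type
  | 0 => ({q // q ∈ S} → Bool)
  | n + 1 => ({q // q ∈ S} → Bool) × Finset (TT S n)

noncomputable def fintypeTT (S : Finset ℕ) : ∀ n, Fintype (TT S n)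
  | 0 => by unfold TT; exact inferInstance
  | n + 1 => by unfold TT; have := fintypeTT S n; exact inferInstance

instance finiteTT (S : Finset ℕ) (n : ℕ) : Finite (TT S n) :=
  @Finite.of_fintype _ (fintypeTT S n)

open Classical in
noncomputable def tp0 (S : Finset ℕ) (M : Kripke) (w : M.W) : {q // q ∈ S} → Bool :=
  fun q => decide (M.V w q.1)

noncomputable def tp (S : Finset ℕ) : (n : ℕ) → (M : Kripke) → M.W → TT S n
  | 0 => fun M w => tp0 S M w
  | n + 1 => fun M w =>
      ((tp0 S M w, (Set.toFinite {t : TT S n | ∃ v, M.R w v ∧ tp S n M v = t}).toFinset) :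
        ({q // q ∈ S} → Bool) × Finset (TT S n))

theorem tp_zero_def (S : Finset ℕ) (M : Kripke) (w : M.W) :
    tp S 0 M w = tp0 S M w := rfl

theorem tp_fst (S : Finset ℕ) (n : ℕ) (M : Kripke) (w : M.W) :
    (tp S (n + 1) M w).1 = tp0 S M w := rfl

theorem mem_tp_snd {S : Finset ℕ} {n : ℕ} {M : Kripke} {w : M.W} {s : TT S n} :
    s ∈ (tp S (n + 1) M w).2 ↔ ∃ v, M.R w v ∧ tp S n M v = s := by
  show s ∈ (Set.toFinite {t : TT S n | ∃ v, M.R w v ∧ tp S n M v = t}).toFinset ↔ _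
  rw [Set.Finite.mem_toFinset]
  exact Iff.rfl

noncomputable def chi0 (S : Finset ℕ) (a : {q // q ∈ S} → Bool) : MF :=
  conjList (S.attach.toList.map (fun q => if a q then MF.var q.1 else neg (MF.var q.1)))

noncomputable def chi (S : Finset ℕ) : (n : ℕ) → TT S n → MF
  | 0 => fun a => chi0 S a
  | n + 1 => fun t =>
      andF (chi0 S t.1)
        (andF (conjList (t.2.toList.map (fun s => diaF (chi S n s))))
          (.box (disjList (t.2.toList.map (chi S n)))))

theorem chi_zero_def (S : Finset ℕ) (a : TT S 0) : chi S 0 a = chi0 S a := rfl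

theorem chi_succ_def (S : Finset ℕ) (n : ℕ) (t : TT S (n + 1)) :
    chi S (n + 1) t =
      andF (chi0 S t.1)
        (andF (conjList (t.2.toList.map (fun s => diaF (chi S n s))))
          (.box (disjList (t.2.toList.map (chi S n))))) := rfl

theorem occurs_chi0 {S : Finset ℕ} {p : ℕ} {a : {q // q ∈ S} → Bool}
    (h : (chi0 S a).occurs p = true) : p ∈ S := by
  rw [chi0, occurs_conjList] at h
  obtain ⟨A, hA, hocc⟩ := h
  obtain ⟨q, hq, rfl⟩ := List.mem_map.1 hA
  by_cases hb : a q
  · simp only [hb, if_pos] at hocc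
    simp only [MF.occurs, beq_iff_eq] at hocc
    exact hocc ▸ q.2
  · simp only [hb, if_neg, Bool.not_eq_true] at hocc
    rw [occurs_neg] at hocc
    simp only [MF.occurs, beq_iff_eq] at hocc
    exact hocc ▸ q.2

theorem occurs_chi {S : Finset ℕ} {p : ℕ} : ∀ {n : ℕ} {t : TT S n},
    (chi S n t).occurs p = true → p ∈ S := by
  intro n
  induction n with
  | zero => intro t h; exact occurs_chi0 h
  | succ n ih =>
    intro t h
    rw [chi_succ_def] at h
    simp only [occurs_andF, MF.occurs, Bool.or_eq_true, Bool.false_eq_true, or_false] at h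
    rcases h with h | h | h
    · exact occurs_chi0 h
    · rw [occurs_conjList] at h
      obtain ⟨A, hA, hocc⟩ := h
      obtain ⟨s, hs, rfl⟩ := List.mem_map.1 hA
      rw [show (diaF (chi S n s)).occurs p = (chi S n s).occurs p by
        simp [diaF, occurs_neg, MF.occurs]] at hocc
      exact ih hocc
    · rw [occurs_disjList] at h
      obtain ⟨A, hA, hocc⟩ := h
      obtain ⟨s, hs, rfl⟩ := List.mem_map.1 hA
      exact ih hocc

theorem sat_chi0 {S : Finset ℕ} {M : Kripke} {w : M.W} :
    sat M w (chi0 S (tp0 S M w)) := by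
  rw [chi0, sat_conjList]
  intro A hA
  obtain ⟨q, hq, rfl⟩ := List.mem_map.1 hA
  by_cases hb : M.V w q.1
  · simp [tp0, hb, sat]
  · simp [tp0, hb, sat_neg, sat]

theorem tp0_eq_of_sat_chi0 {S : Finset ℕ} {a : {q // q ∈ S} → Bool} {M : Kripke} {w : M.W}
    (h : sat M w (chi0 S a)) : tp0 S M w = a := by
  rw [chi0, sat_conjList] at h
  funext q
  have hmem : (if a q then MF.var q.1 else neg (MF.var q.1)) ∈
      S.attach.toList.map (fun q => if a q then MF.var q.1 else neg (MF.var q.1)) :=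
    List.mem_map.2 ⟨q, by simp, rfl⟩
  have hq := h _ hmem
  by_cases hb : a q
  · simp only [hb, if_pos] at hq
    show tp0 S M w q = a q
    simp only [tp0, hb]
    simpa [sat] using hq
  · simp only [hb, if_neg, Bool.not_eq_true] at hq
    rw [sat_neg] at hq
    show tp0 S M w q = a q
    simp only [tp0, hb]
    simpa [sat] using hq

theorem sat_chi {S : Finset ℕ} : ∀ (n : ℕ) (M : Kripke) (w : M.W),
    sat M w (chi S n (tp S n M w)) := by
  intro n
  induction n with
  | zero => intro M w; exact sat_chi0
  | succ n ih =>
    intro M w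
    rw [chi_succ_def, sat_andF, sat_andF, tp_fst]
    refine ⟨sat_chi0, ?_, ?_⟩
    · rw [sat_conjList]
      intro A hA
      obtain ⟨s, hs, rfl⟩ := List.mem_map.1 hA
      rw [Finset.mem_toList, mem_tp_snd] at hs
      obtain ⟨v, hv, rfl⟩ := hs
      rw [sat_diaF]
      exact ⟨v, hv, ih M v⟩
    · intro v hv
      rw [sat_disjList]
      refine ⟨chi S n (tp S n M v), ?_, ih M v⟩
      refine List.mem_map.2 ⟨tp S n M v, ?_, rfl⟩
      rw [Finset.mem_toList, mem_tp_snd]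
      exact ⟨v, hv, rfl⟩

theorem tp_eq_of_sat_chi {S : Finset ℕ} : ∀ (n : ℕ) (t : TT S n) (M : Kripke) (w : M.W),
    sat M w (chi S n t) → tp S n M w = t := by
  intro n
  induction n with
  | zero => intro t M w h; exact tp0_eq_of_sat_chi0 h
  | succ n ih =>
    intro t M w h
    rw [chi_succ_def, sat_andF, sat_andF] at h
    obtain ⟨h0, hdia, hbox⟩ := h
    have ht0 : (tp S (n + 1) M w).1 = t.1 := by
      rw [tp_fst]; exact tp0_eq_of_sat_chi0 h0
    have hsnd : (tp S (n + 1) M w).2 = t.2 := by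
      apply Finset.ext
      intro s
      rw [mem_tp_snd]
      constructor
      · rintro ⟨v, hv, rfl⟩
        have hb := hbox v hv
        rw [sat_disjList] at hb
        obtain ⟨A, hA, hsat⟩ := hb
        obtain ⟨s', hs', rfl⟩ := List.mem_map.1 hA
        rw [Finset.mem_toList] at hs'
        have := ih s' M v hsat
        rwa [this]
      · intro hs
        rw [sat_conjList] at hdia
        have hd := hdia _ (List.mem_map.2 ⟨s, Finset.mem_toList.2 hs, rfl⟩)
        rw [sat_diaF] at hd
        obtain ⟨v, hv, hsat⟩ := hd
        exact ⟨v, hv, ih s M v hsat⟩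
    exact Prod.ext ht0 hsnd

end KUIP

namespace KUIP

/-! ### depth and vars -/

def mdepth : MF → ℕ
  | .var _ => 0
  | .bot => 0
  | .imp a b => max (mdepth a) (mdepth b)
  | .box a => mdepth a + 1

def mvars : MF → Finset ℕ
  | .var q => {q}
  | .bot => ∅
  | .imp a b => mvars a ∪ mvars b
  | .box a => mvars a

theorem mem_mvars_of_occurs : ∀ {A : MF} {q : ℕ}, A.occurs q = true → q ∈ mvars A := by
  intro A
  induction A with
  | var r => intro q h; simp [MF.occurs, beq_iff_eq] at h; simp [mvars, h]
  | bot => intro q h; simp [MF.occurs] at h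
  | imp a b iha ihb =>
    intro q h
    simp only [MF.occurs, Bool.or_eq_true] at h
    rcases h with h | h
    · exact Finset.mem_union.2 (Or.inl (iha h))
    · exact Finset.mem_union.2 (Or.inr (ihb h))
  | box a iha => intro q h; exact iha h

/-! ### tp agreement lemmas -/

theorem tp_atoms {S : Finset ℕ} {M M' : Kripke} : ∀ {n : ℕ} {u : M.W} {v : M'.W},
    tp S n M u = tp S n M' v → ∀ {q : ℕ}, q ∈ S → (M.V u q ↔ M'.V v q) := by
  intro n
  cases n with
  | zero =>
    intro u v h q hq
    have h0 : tp0 S M u = tp0 S M' v := h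
    have := congrFun h0 ⟨q, hq⟩
    simpa [tp0, decide_eq_decide] using this
  | succ n =>
    intro u v h q hq
    have h1 : tp0 S M u = tp0 S M' v := congrArg Prod.fst h
    have := congrFun h1 ⟨q, hq⟩
    simpa [tp0, decide_eq_decide] using this

theorem tp_succ_types {S : Finset ℕ} {M M' : Kripke} {n : ℕ} {u : M.W} {v : M'.W}
    (h : tp S (n + 1) M u = tp S (n + 1) M' v) (t : TT S n) :
    (∃ u1, M.R u u1 ∧ tp S n M u1 = t) ↔ (∃ v1, M'.R v v1 ∧ tp S n M' v1 = t) := by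
  have h2 : (tp S (n + 1) M u).2 = (tp S (n + 1) M' v).2 := congrArg Prod.snd h
  rw [← mem_tp_snd, ← mem_tp_snd, h2]

/-! ### the amalgamated model -/

section Amalg

variable (S : Finset ℕ) (p : ℕ) (M M' : Kripke)

def AW : Type := (ℕ × M.W × M'.W) ⊕ M'.W

noncomputable def amR : AW M M' → AW M M' → Prop
  | .inl (k + 1, u, v), .inl (j, u1, v1) =>
      j = k ∧ M.R u u1 ∧ M'.R v v1 ∧ tp S j M u1 = tp S j M' v1
  | .inl (0, _, v), .inr v1 => M'.R v v1
  | .inr v, .inr v1 => M'.R v v1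
  | _, _ => False

noncomputable def amV : AW M M' → ℕ → Prop
  | .inl (_, u, v), q => if q = p then M.V u p else M'.V v q
  | .inr v, q => q ≠ p ∧ M'.V v q

noncomputable def amalg : Kripke where
  W := AW M M'
  R := amR S M M'
  V := amV p M M'

variable {S p M M'}

theorem amalg_R_iff {x y : AW M M'} : (amalg S p M M').R x y ↔ amR S M M' x y := Iff.rfl

theorem amR_zero {u : M.W} {v : M'.W} {y : AW M M'} :
    amR S M M' (.inl (0, u, v)) y ↔ ∃ v1, y = .inr v1 ∧ M'.R v v1 := by
  cases y with
  | inl z =>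
    obtain ⟨j, u1, v1⟩ := z
    simp [amR]
  | inr v1 =>
    simp only [amR]
    exact ⟨fun h => ⟨v1, rfl, h⟩, fun ⟨v2, he, h⟩ => by cases he; exact h⟩

theorem amR_succ {k : ℕ} {u : M.W} {v : M'.W} {y : AW M M'} :
    amR S M M' (.inl (k + 1, u, v)) y ↔
      ∃ u1 v1, y = .inl (k, u1, v1) ∧ M.R u u1 ∧ M'.R v v1 ∧ tp S k M u1 = tp S k M' v1 := by
  cases y with
  | inl z =>
    obtain ⟨j, u1, v1⟩ := z
    constructor
    · intro h
      obtain ⟨hj, h1, h2, h3⟩ := h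
      subst hj
      exact ⟨u1, v1, rfl, h1, h2, h3⟩
    · rintro ⟨u1', v1', heq, h1, h2, h3⟩
      cases heq
      exact ⟨rfl, h1, h2, h3⟩
  | inr v1 =>
    constructor
    · intro h; exact h.elim
    · rintro ⟨u1, v1', heq, -⟩; cases heq

theorem amR_inr {v : M'.W} {y : AW M M'} :
    amR S M M' (.inr v) y ↔ ∃ v1, y = .inr v1 ∧ M'.R v v1 := by
  cases y with
  | inl z => obtain ⟨j, u1, v1⟩ := z; simp [amR]
  | inr v1 =>
    simp only [amR]
    exact ⟨fun h => ⟨v1, rfl, h⟩, fun ⟨v2, he, h⟩ => by cases he; exact h⟩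

theorem amalgA : ∀ (C : MF), (∀ q, C.occurs q = true → q = p ∨ q ∈ S) →
    ∀ (k : ℕ), mdepth C ≤ k → ∀ (u : M.W) (v : M'.W), tp S k M u = tp S k M' v →
    (sat (amalg S p M M') (.inl (k, u, v)) C ↔ sat M u C) := by
  intro C
  induction C with
  | var q =>
    intro hocc k _ u v htp
    show amV p M M' (.inl (k, u, v)) q ↔ M.V u q
    by_cases hq : q = p
    · subst hq; simp [amV]
    · simp only [amV, if_neg hq]
      have := hocc q (by simp [MF.occurs])
      rcases this with h | h
      · exact absurd h hq
      · exact (tp_atoms htp h).symm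
  | bot => intro _ k _ u v _; exact Iff.rfl
  | imp a b iha ihb =>
    intro hocc k hd u v htp
    have ha := iha (fun q h => hocc q (by simp [MF.occurs, h])) k
      (le_trans (le_max_left _ _) hd) u v htp
    have hb := ihb (fun q h => hocc q (by simp [MF.occurs, h])) k
      (le_trans (le_max_right _ _) hd) u v htp
    show (_ → _) ↔ (_ → _)
    rw [ha, hb]
  | box C ih =>
    intro hocc k hd u v htp
    cases k with
    | zero => exact absurd hd (by simp [mdepth])
    | succ k =>
      have hd' : mdepth C ≤ k := by
        simp only [mdepth] at hd; omega
      constructor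
      · intro h u1 hu1
        have := tp_succ_types htp (tp S k M u1)
        obtain ⟨v1, hv1, htp1⟩ := this.1 ⟨u1, hu1, rfl⟩
        have hrel : (amalg S p M M').R (.inl (k + 1, u, v)) (.inl (k, u1, v1)) :=
          amalg_R_iff.2 (amR_succ.2 ⟨u1, v1, rfl, hu1, hv1, htp1.symm⟩)
        have := h _ hrel
        exact (ih hocc k hd' u1 v1 htp1.symm).1 this
      · intro h y hy
        obtain ⟨u1, v1, rfl, hu1, hv1, htp1⟩ := amR_succ.1 (amalg_R_iff.1 hy)
        exact (ih hocc k hd' u1 v1 htp1).2 (h u1 hu1)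

theorem amalgBr : ∀ (C : MF), C.occurs p = false →
    ∀ v : M'.W, (sat (amalg S p M M') (.inr v) C ↔ sat M' v C) := by
  intro C
  induction C with
  | var q =>
    intro hocc v
    have hq : q ≠ p := by
      intro h; subst h; simp [MF.occurs] at hocc
    show amV p M M' (.inr v) q ↔ M'.V v q
    simp [amV, hq]
  | bot => intro _ v; exact Iff.rfl
  | imp a b iha ihb =>
    intro hocc v
    simp only [MF.occurs, Bool.or_eq_false_iff] at hocc
    have := iha hocc.1 v
    have := ihb hocc.2 v
    show (_ → _) ↔ (_ → _)
    rw [iha hocc.1 v, ihb hocc.2 v]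
  | box C ih =>
    intro hocc v
    constructor
    · intro h v1 hv1
      exact (ih hocc v1).1 (h _ (amalg_R_iff.2 (amR_inr.2 ⟨v1, rfl, hv1⟩)))
    · intro h y hy
      obtain ⟨v1, rfl, hv1⟩ := amR_inr.1 (amalg_R_iff.1 hy)
      exact (ih hocc v1).2 (h v1 hv1)

theorem amalgBl : ∀ (C : MF), C.occurs p = false →
    ∀ (k : ℕ) (u : M.W) (v : M'.W), tp S k M u = tp S k M' v →
    (sat (amalg S p M M') (.inl (k, u, v)) C ↔ sat M' v C) := by
  intro C
  induction C with
  | var q =>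
    intro hocc k u v htp
    have hq : q ≠ p := by
      intro h; subst h; simp [MF.occurs] at hocc
    show amV p M M' (.inl (k, u, v)) q ↔ M'.V v q
    simp [amV, hq]
  | bot => intro _ k u v _; exact Iff.rfl
  | imp a b iha ihb =>
    intro hocc k u v htp
    simp only [MF.occurs, Bool.or_eq_false_iff] at hocc
    show (_ → _) ↔ (_ → _)
    rw [iha hocc.1 k u v htp, ihb hocc.2 k u v htp]
  | box C ih =>
    intro hocc k u v htp
    cases k with
    | zero =>
      constructor
      · intro h v1 hv1
        exact (amalgBr C hocc v1).1 (h _ (amalg_R_iff.2 (amR_zero.2 ⟨v1, rfl, hv1⟩)))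
      · intro h y hy
        obtain ⟨v1, rfl, hv1⟩ := amR_zero.1 (amalg_R_iff.1 hy)
        exact (amalgBr C hocc v1).2 (h v1 hv1)
    | succ k =>
      constructor
      · intro h v1 hv1
        obtain ⟨u1, hu1, htp1⟩ := (tp_succ_types htp (tp S k M' v1)).2 ⟨v1, hv1, rfl⟩
        have hrel : (amalg S p M M').R (.inl (k + 1, u, v)) (.inl (k, u1, v1)) :=
          amalg_R_iff.2 (amR_succ.2 ⟨u1, v1, rfl, hu1, hv1, htp1⟩)
        exact (ih hocc k u1 v1 htp1).1 (h _ hrel)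
      · intro h y hy
        obtain ⟨u1, v1, rfl, hu1, hv1, htp1⟩ := amR_succ.1 (amalg_R_iff.1 hy)
        exact (ih hocc k u1 v1 htp1).2 (h v1 hv1)

end Amalg

/-! ### the existential uniform interpolant -/

theorem exists_Ae (A : MF) (p : ℕ) :
    ∃ Ae : MF, pFree p Ae ∧ KThm (A.imp Ae) ∧
      (∀ B : MF, pFree p B → KThm (A.imp B) → KThm (Ae.imp B)) := by
  classical
  set S : Finset ℕ := (mvars A).erase p with hS
  set n : ℕ := mdepth A with hn
  have hpS : p ∉ S := Finset.notMem_erase _ _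
  set TA : Set (TT S n) := {t | ∃ (M : Kripke) (w : M.W), sat M w A ∧ tp S n M w = t} with hTA
  set Ae : MF := disjList (((Set.toFinite TA).toFinset).toList.map (chi S n)) with hAe
  have hvarsA : ∀ q, A.occurs q = true → q = p ∨ q ∈ S := by
    intro q hq
    by_cases h : q = p
    · exact Or.inl h
    · exact Or.inr (Finset.mem_erase.2 ⟨h, mem_mvars_of_occurs hq⟩)
  refine ⟨Ae, ?_, ?_, ?_⟩
  · -- p-free
    rw [pFree, ← Bool.not_eq_true]
    intro hocc
    rw [hAe, occurs_disjList] at hocc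
    obtain ⟨φ, hφ, hoccφ⟩ := hocc
    obtain ⟨t, ht, rfl⟩ := List.mem_map.1 hφ
    exact hpS (occurs_chi hoccφ)
  · -- K ⊢ A → Ae
    apply completeness
    intro M w
    show sat M w A → sat M w Ae
    intro hA
    rw [hAe, sat_disjList]
    refine ⟨chi S n (tp S n M w), ?_, sat_chi n M w⟩
    refine List.mem_map.2 ⟨tp S n M w, ?_, rfl⟩
    rw [Finset.mem_toList, Set.Finite.mem_toFinset]
    exact ⟨M, w, hA, rfl⟩
  · -- strongest p-free consequence
    intro B hB hAB
    apply completeness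
    intro M' w'
    show sat M' w' Ae → sat M' w' B
    intro hAe'
    rw [hAe, sat_disjList] at hAe'
    obtain ⟨φ, hφ, hsatφ⟩ := hAe'
    obtain ⟨t, ht, rfl⟩ := List.mem_map.1 hφ
    rw [Finset.mem_toList, Set.Finite.mem_toFinset] at ht
    obtain ⟨M, w, hwA, htp⟩ := ht
    have htp' : tp S n M' w' = t := tp_eq_of_sat_chi n t M' w' hsatφ
    have htpe : tp S n M w = tp S n M' w' := by rw [htp, htp']
    have hA_N : sat (amalg S p M M') (.inl (n, w, w')) A :=
      (amalgA A hvarsA n le_rfl w w' htpe).2 hwA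
    have hB_N : sat (amalg S p M M') (.inl (n, w, w')) B :=
      soundness hAB (amalg S p M M') (.inl (n, w, w')) hA_N
    exact (amalgBl B hB n w w' htpe).1 hB_N

end KUIP

/-- The modal logic `K` has the uniform interpolation property. -/
theorem K_uniform_interpolation (A : MF) (p : Nat) :
    ∃ Af Ae : MF, pFree p Af ∧ pFree p Ae ∧
      KThm (Af.imp A) ∧ KThm (A.imp Ae) ∧
      (∀ B : MF, pFree p B → KThm (B.imp A) → KThm (B.imp Af)) ∧
      (∀ B : MF, pFree p B → KThm (A.imp B) → KThm (Ae.imp B)) := by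
  obtain ⟨Ae, hAe_free, hAAe, hAe_min⟩ := KUIP.exists_Ae A p
  obtain ⟨Ae', hAe'_free, hnAAe', hAe'_min⟩ := KUIP.exists_Ae (A.imp .bot) p
  refine ⟨Ae'.imp .bot, Ae, ?_, hAe_free, ?_, hAAe, ?_, hAe_min⟩
  · -- p-free
    show (Ae'.imp MF.bot).occurs p = false
    simp only [MF.occurs, Bool.or_eq_false_iff]
    exact ⟨hAe'_free, trivial⟩
  · -- K ⊢ Af → A
    apply KUIP.completeness
    intro M w
    show KUIP.sat M w ((Ae'.imp MF.bot).imp A)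
    intro hnAe'
    by_contra hA
    have hsat : KUIP.sat M w (A.imp MF.bot) := fun ha => hA ha
    exact hnAe' (KUIP.soundness hnAAe' M w hsat)
  · -- weakest p-free antecedent
    intro B hB hBA
    have h1 : KThm ((A.imp MF.bot).imp (B.imp MF.bot)) := by
      apply KUIP.completeness
      intro M w
      show KUIP.sat M w ((A.imp MF.bot).imp (B.imp MF.bot))
      intro hnA hB'
      exact hnA (KUIP.soundness hBA M w hB')
    have hBfree : pFree p (B.imp MF.bot) := by
      show (B.imp MF.bot).occurs p = false
      simp only [MF.occurs, Bool.or_eq_false_iff]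
      exact ⟨hB, trivial⟩
    have h2 : KThm (Ae'.imp (B.imp MF.bot)) := hAe'_min (B.imp MF.bot) hBfree h1
    exact KUIP.swap_thm h2
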